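/- The multiplicative update of the activation matrix does not increase the data-fit cost: with all entries of z, t, v strictly positive and c entrywise nonnegative, define v'(j,k) = v(j,k) · ( ∑_{a,i} c(a,i,j)·z(a,k)·t(i,k)/m(a,i,j) ) / ( ∑_{a,i} z(a,k)·t(i,k) ). If all entries v'(j,k) are strictly positive, then ∑_{a,i,j} D(c(a,i,j) | ∑_{k} z(a,k)·t(i,k)·v'(j,k)) ≤ ∑_{a,i,j} D(c(a,i,j) | m(a,i,j)). -/

import Mathlib

open Finset Real

/-- Generalized Kullback–Leibler divergence `D(b|a) = b·log(b/a) + a − b`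
(with the convention `0·log 0 = 0`, automatic since `Real.log 0 = 0`). -/
noncomputable def klD (q a : ℝ) : ℝ := q * Real.log (q / a) + a - q

/-- NTF model `m(a,i,j) = ∑ k, z(a,k)·t(i,k)·v(j,k)`. -/
noncomputable def ntfModel {A I J K : ℕ}
    (z : Fin A → Fin K → ℝ) (t : Fin I → Fin K → ℝ) (v : Fin J → Fin K → ℝ)
    (a : Fin A) (i : Fin I) (j : Fin J) : ℝ :=
  ∑ k, z a k * t i k * v j k

/-- Regularized cost
`J(z,t,v,b) = ∑_{a,i,j} D(c(a,i,j)|m(a,i,j)) + μ·∑_k ∑_a D(p(b(k),a)|z(a,k))`. -/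
noncomputable def ntfCost {A I J K B : ℕ}
    (c : Fin A → Fin I → Fin J → ℝ) (μ : ℝ) (p : Fin B → Fin A → ℝ)
    (z : Fin A → Fin K → ℝ) (t : Fin I → Fin K → ℝ) (v : Fin J → Fin K → ℝ)
    (b : Fin K → Fin B) : ℝ :=
  (∑ a, ∑ i, ∑ j, klD (c a i j) (ntfModel z t v a i j)) +
    μ * ∑ k, ∑ a, klD (p (b k) a) (z a k)

/-- The multiplicative update of the activation matrix does not increase the
data-fit cost. -/
lemma aux_log (x y : ℝ) (hx : 0 < x) (hy : 0 < y) :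
    x - y - x * Real.log (x / y) ≤ 0 := by
  have h := Real.log_le_sub_one_of_pos (show 0 < y / x by positivity)
  have hlog : Real.log (y / x) = - Real.log (x / y) := by
    rw [← Real.log_inv]; congr 1; field_simp
  rw [hlog] at h
  have h2 := mul_le_mul_of_nonneg_left h hx.le
  have h3 : x * (y / x) = y := by field_simp
  nlinarith [h2, h3]

lemma aux_jensen (K : ℕ) (lam x : Fin K → ℝ) (hlam : ∀ k, 0 ≤ lam k)
    (hsum : ∑ k, lam k = 1) (hx : ∀ k, 0 < x k) :
    ∑ k, lam k * Real.log (x k) ≤ Real.log (∑ k, lam k * x k) := by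
  simpa [smul_eq_mul] using
    (strictConcaveOn_log_Ioi.concaveOn).le_map_sum (t := Finset.univ)
      (w := lam) (p := x) (fun k _ => hlam k) hsum (fun k _ => Set.mem_Ioi.mpr (hx k))

lemma aux_point (K : ℕ) (hK : 0 < K) (w vv vv' : Fin K → ℝ) (hw : ∀ k, 0 < w k)
    (hvv : ∀ k, 0 < vv k) (hvv' : ∀ k, 0 < vv' k) (c : ℝ) (hc : 0 ≤ c) :
    klD c (∑ k, w k * vv' k) ≤ klD c (∑ k, w k * vv k) +
      ∑ k, (w k * (vv' k - vv k)
        - (c * w k * vv k / (∑ k', w k' * vv k')) * Real.log (vv' k / vv k)) := by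
  have : Nonempty (Fin K) := ⟨⟨0, hK⟩⟩
  set m := ∑ k, w k * vv k with hm
  set m' := ∑ k, w k * vv' k with hm'
  have hmpos : 0 < m := Finset.sum_pos (fun k _ => mul_pos (hw k) (hvv k)) univ_nonempty
  have hm'pos : 0 < m' := Finset.sum_pos (fun k _ => mul_pos (hw k) (hvv' k)) univ_nonempty
  have hdiff : ∑ k, w k * (vv' k - vv k) = m' - m := by
    rw [hm, hm', ← Finset.sum_sub_distrib]
    exact Finset.sum_congr rfl fun k _ => by ring
  have hsplit : ∑ k, (w k * (vv' k - vv k)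
        - (c * w k * vv k / m) * Real.log (vv' k / vv k))
      = (m' - m) - c * ∑ k, (w k * vv k / m) * Real.log (vv' k / vv k) := by
    rw [Finset.sum_sub_distrib, hdiff, Finset.mul_sum]
    congr 1
    exact Finset.sum_congr rfl fun k _ => by ring
  rw [hsplit]
  rcases eq_or_lt_of_le hc with h0 | hcpos
  · simp only [klD, ← h0, zero_mul, zero_add, sub_zero, mul_zero]
    linarith
  -- c > 0 case
  have hjen : Real.log m + ∑ k, (w k * vv k / m) * Real.log (vv' k / vv k)
      ≤ Real.log m' := by
    set lam : Fin K → ℝ := fun k => w k * vv k / m with hlam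
    set x : Fin K → ℝ := fun k => m * vv' k / vv k with hxdef
    have hlam0 : ∀ k, 0 ≤ lam k := fun k => by
      have := mul_pos (hw k) (hvv k); positivity
    have hlamsum : ∑ k, lam k = 1 := by
      rw [hlam]
      simp only [← Finset.sum_div]
      rw [← hm, div_self hmpos.ne']
    have hxpos : ∀ k, 0 < x k := fun k => by
      have := hvv' k; have := hvv k; positivity
    have hj := aux_jensen K lam x hlam0 hlamsum hxpos
    have hsum_eq : ∑ k, lam k * x k = m' := by
      rw [hm']
      refine Finset.sum_congr rfl fun k _ => ?_
      rw [hlam, hxdef]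
      field_simp [hmpos.ne', (hvv k).ne']
    have hlog_eq : ∑ k, lam k * Real.log (x k)
        = Real.log m + ∑ k, lam k * Real.log (vv' k / vv k) := by
      have : ∀ k, lam k * Real.log (x k)
          = lam k * Real.log m + lam k * Real.log (vv' k / vv k) := by
        intro k
        have hx' : x k = m * (vv' k / vv k) := by rw [hxdef]; ring
        rw [hx', Real.log_mul hmpos.ne' (div_pos (hvv' k) (hvv k)).ne']
        ring
      rw [Finset.sum_congr rfl fun k _ => this k, Finset.sum_add_distrib,
        ← Finset.sum_mul, hlamsum, one_mul]
    rw [hsum_eq, hlog_eq] at hj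
    exact hj
  have hcj := mul_le_mul_of_nonneg_left hjen hc
  simp only [klD]
  rw [Real.log_div hcpos.ne' hm'pos.ne', Real.log_div hcpos.ne' hmpos.ne']
  rw [mul_sub, mul_sub] at *
  rw [mul_add] at hcj
  linarith

theorem stmt4 (A I J K : ℕ)
    (z : Fin A → Fin K → ℝ) (t : Fin I → Fin K → ℝ) (v : Fin J → Fin K → ℝ)
    (hz : ∀ a k, 0 < z a k) (ht : ∀ i k, 0 < t i k) (hv : ∀ j k, 0 < v j k)
    (c : Fin A → Fin I → Fin J → ℝ) (hc : ∀ a i j, 0 ≤ c a i j)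
    (v' : Fin J → Fin K → ℝ)
    (hv'def : ∀ j k, v' j k =
      v j k * (∑ a, ∑ i, c a i j * z a k * t i k / ntfModel z t v a i j) /
        (∑ a, ∑ i, z a k * t i k))
    (hv' : ∀ j k, 0 < v' j k) :
    ∑ a, ∑ i, ∑ j, klD (c a i j) (ntfModel z t v' a i j) ≤
      ∑ a, ∑ i, ∑ j, klD (c a i j) (ntfModel z t v a i j) := by
  rcases Nat.eq_zero_or_pos K with hK | hK
  · subst hK; simp [ntfModel]
  rcases Nat.eq_zero_or_pos A with hA | hA
  · subst hA; simp
  rcases Nat.eq_zero_or_pos I with hI | hI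
  · subst hI; simp
  rcases Nat.eq_zero_or_pos J with hJ | hJ
  · subst hJ; simp
  have hAne : Nonempty (Fin A) := ⟨⟨0, hA⟩⟩
  have hIne : Nonempty (Fin I) := ⟨⟨0, hI⟩⟩
  -- the correction term
  set T : Fin A → Fin I → Fin J → Fin K → ℝ := fun a i j k =>
    z a k * t i k * (v' j k - v j k)
      - (c a i j * (z a k * t i k) * v j k / ntfModel z t v a i j)
        * Real.log (v' j k / v j k) with hT
  have hpoint : ∀ a i j,
      klD (c a i j) (ntfModel z t v' a i j)
        ≤ klD (c a i j) (ntfModel z t v a i j) + ∑ k, T a i j k := by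
    intro a i j
    have := aux_point K hK (fun k => z a k * t i k) (v j) (v' j)
      (fun k => mul_pos (hz a k) (ht i k)) (fun k => hv j k) (fun k => hv' j k)
      (c a i j) (hc a i j)
    simpa [ntfModel, hT, mul_assoc] using this
  have hstep : ∑ a, ∑ i, ∑ j, klD (c a i j) (ntfModel z t v' a i j)
      ≤ (∑ a, ∑ i, ∑ j, klD (c a i j) (ntfModel z t v a i j))
        + ∑ a, ∑ i, ∑ j, ∑ k, T a i j k := by
    rw [← Finset.sum_add_distrib]
    refine Finset.sum_le_sum fun a _ => ?_
    rw [← Finset.sum_add_distrib]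
    refine Finset.sum_le_sum fun i _ => ?_
    rw [← Finset.sum_add_distrib]
    exact Finset.sum_le_sum fun j _ => hpoint a i j
  refine hstep.trans ?_
  have hTle : ∑ a, ∑ i, ∑ j, ∑ k, T a i j k ≤ 0 := by
    have hswap : ∑ a, ∑ i, ∑ j, ∑ k, T a i j k
        = ∑ j, ∑ k, ∑ a, ∑ i, T a i j k := by
      calc ∑ a, ∑ i, ∑ j, ∑ k, T a i j k
          = ∑ a, ∑ j, ∑ i, ∑ k, T a i j k :=
            Finset.sum_congr rfl fun a _ => Finset.sum_comm
        _ = ∑ j, ∑ a, ∑ i, ∑ k, T a i j k := Finset.sum_comm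
        _ = ∑ j, ∑ a, ∑ k, ∑ i, T a i j k :=
            Finset.sum_congr rfl fun j _ =>
              Finset.sum_congr rfl fun a _ => Finset.sum_comm
        _ = ∑ j, ∑ k, ∑ a, ∑ i, T a i j k :=
            Finset.sum_congr rfl fun j _ => Finset.sum_comm
    rw [hswap]
    refine Finset.sum_nonpos fun j _ => Finset.sum_nonpos fun k _ => ?_
    set W := ∑ a, ∑ i, z a k * t i k with hW
    set S := ∑ a, ∑ i, c a i j * z a k * t i k / ntfModel z t v a i j with hS
    have hWpos : 0 < W :=
      Finset.sum_pos (fun a _ => Finset.sum_pos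
        (fun i _ => mul_pos (hz a k) (ht i k)) univ_nonempty) univ_nonempty
    have hvS : S * v j k = v' j k * W := by
      have := hv'def j k
      rw [← hW, ← hS] at this
      rw [this, div_mul_cancel₀ _ hWpos.ne']; ring
    have hmain : ∑ a, ∑ i, T a i j k
        = W * (v' j k - v j k) - S * (v j k * Real.log (v' j k / v j k)) := by
      rw [hW, hS, Finset.sum_mul, Finset.sum_mul, ← Finset.sum_sub_distrib]
      refine Finset.sum_congr rfl fun a _ => ?_
      rw [Finset.sum_mul, Finset.sum_mul, ← Finset.sum_sub_distrib]
      exact Finset.sum_congr rfl fun i _ => by rw [hT]; ring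
    rw [hmain]
    have h1 : S * (v j k * Real.log (v' j k / v j k))
        = W * (v' j k * Real.log (v' j k / v j k)) := by
      rw [← mul_assoc, hvS]; ring
    rw [h1]
    have := aux_log (v' j k) (v j k) (hv' j k) (hv j k)
    nlinarith [hWpos, this]
  linarith
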